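/- In the Orlik–Solomon algebra of a simple matroid with a fixed linear order on the ground set S, for any independent set T ⊆ S taken in the induced order, m(T) = Σ_{σ ∈ Σ_p} sgn(σ) · m(ℱ(σT)), where the sum runs over all permutations σ of T, ℱ(σT) is the flag of flats generated by the reordered tuple σT, and m(F) denotes the unique nbc-monomial associated to a flag F (or 0 if the flag is not standard). -/

import Mathlib

open scoped Classical

noncomputable section OrlikSolomon

variable (K : Type*) [Field K]

/-- The generator `e_s` of the exterior algebra on the free module with basis `S`. -/
def extGen {α : Type*} (s : α) : ExteriorAlgebra K (α →₀ K) :=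
  ExteriorAlgebra.ι K (Finsupp.single s 1)

/-- The degree `-1` differential `∂` of the exterior algebra (the graded derivation
with `∂ e_s = 1`), realized as contraction with the linear functional sending each
basis vector to `1`. -/
def extBoundary (α : Type*) : ExteriorAlgebra K (α →₀ K) →ₗ[K] ExteriorAlgebra K (α →₀ K) :=
  CliffordAlgebra.contractLeft (Finsupp.linearCombination K fun _ : α => (1 : K))

/-- The relations of the Orlik–Solomon algebra of the matroid `Mat`: all elements
`∂(e_{s₁} ∧ ⋯ ∧ e_{s_p})` for dependent subsets `{s₁, …, s_p}` are set to zero. -/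
def osRel {α : Type*} (Mat : Matroid α) :
    ExteriorAlgebra K (α →₀ K) → ExteriorAlgebra K (α →₀ K) → Prop :=
  fun x y => y = 0 ∧ ∃ (p : ℕ) (f : Fin p → α), Function.Injective f ∧
    ¬ Mat.Indep (Set.range f) ∧
    x = extBoundary K α (List.ofFn fun i => extGen K (f i)).prod

/-- The Orlik–Solomon algebra of the matroid `Mat` over `K`. -/
abbrev OSAlgebra {α : Type*} (Mat : Matroid α) := RingQuot (osRel K Mat)

/-- The generator `e_s` of the Orlik–Solomon algebra. -/
def osE {α : Type*} (Mat : Matroid α) (s : α) : OSAlgebra K Mat :=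
  RingQuot.mkRingHom (osRel K Mat) (extGen K s)

/-- The ordered monomial `m(T) = e_{t₁} ⋯ e_{t_p}` associated to a tuple `T`. -/
def osMonomial {α : Type*} (Mat : Matroid α) {p : ℕ} (T : Fin p → α) : OSAlgebra K Mat :=
  (List.ofFn fun i => osE K Mat (T i)).prod

end OrlikSolomon

noncomputable section

variable (K : Type*) [Field K]
variable {α : Type*} [Fintype α] [LinearOrder α]

/-- `C` is a circuit of the matroid `Mat`: a minimal dependent set. -/
def IsCircuitSet (Mat : Matroid α) (C : Set α) : Prop :=
  ¬ Mat.Indep C ∧ ∀ D ⊂ C, Mat.Indep D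

/-- `C` is a broken circuit: it is obtained from a circuit by deleting its least
element (equivalently, there is `a ∉ C` smaller than all elements of `C` with
`C ∪ {a}` a circuit). -/
def IsBrokenCircuit (Mat : Matroid α) (C : Set α) : Prop :=
  ∃ a : α, a ∉ C ∧ (∀ b ∈ C, a < b) ∧ IsCircuitSet Mat (insert a C)

/-- A set is `nbc` if it contains no broken circuit. -/
def IsNBC (Mat : Matroid α) (T : Set α) : Prop :=
  ∀ C ⊆ T, ¬ IsBrokenCircuit Mat C

/-- The canonical tuple of the flag `ℱ(g)` generated by a tuple `g = (t₁, …, t_p)`: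
its `k`-th entry is the least element of `⟨g_k, …, g_p⟩ ∖ ⟨g_{k+1}, …, g_p⟩`
(the successive difference of the flag of flats). -/
def flagTuple (Mat : Matroid α) {p : ℕ} (g : Fin p → α) : Fin p → α := fun i =>
  let S : Set α := Mat.closure (g '' {j | i ≤ j}) \ Mat.closure (g '' {j | i < j})
  if h : (Set.toFinite S).toFinset.Nonempty then (Set.toFinite S).toFinset.min' h
  else g i

/-- The `nbc`-monomial `m(F)` of the flag `F = ℱ(g)`: the monomial of the canonical
tuple of the flag, provided this tuple is increasing and its underlying set is
`nbc` (i.e. the flag is standard); otherwise `0`. -/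
def flagMonomial (Mat : Matroid α) {p : ℕ} (g : Fin p → α) : OSAlgebra K Mat :=
  if StrictMono (flagTuple Mat g) ∧ IsNBC Mat (Set.range (flagTuple Mat g)) then
    osMonomial K Mat (flagTuple Mat g)
  else 0

section PartA

variable {K : Type*} [Field K] {α : Type*}

lemma extGen_anticomm (s t : α) :
    extGen K s * extGen K t = -(extGen K t * extGen K s) := by
  have h := ExteriorAlgebra.ι_sq_zero (R := K)
    (Finsupp.single s (1 : K) + Finsupp.single t (1 : K))
  rw [map_add, add_mul, mul_add, mul_add, ExteriorAlgebra.ι_sq_zero,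
    ExteriorAlgebra.ι_sq_zero, zero_add, add_zero] at h
  rw [extGen, extGen, eq_neg_iff_add_eq_zero]
  rw [add_comm] at h ⊢
  exact h

lemma extGen_sq (s : α) : extGen K s * extGen K s = 0 :=
  ExteriorAlgebra.ι_sq_zero _

variable (Mat : Matroid α)

lemma osE_anticomm (s t : α) :
    osE K Mat s * osE K Mat t = -(osE K Mat t * osE K Mat s) := by
  rw [osE, osE, ← map_mul, ← map_mul, ← map_neg, extGen_anticomm]

lemma osE_sq (s : α) : osE K Mat s * osE K Mat s = 0 := by
  rw [osE, ← map_mul, extGen_sq, map_zero]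

lemma osMonomial_cons {p : ℕ} (x : α) (w : Fin p → α) :
    osMonomial K Mat (Fin.cons x w) = osE K Mat x * osMonomial K Mat w := by
  simp [osMonomial, List.ofFn_succ]

lemma comp_succ_succAbove {β : Type*} {q : ℕ} (g : Fin (q + 2) → β) (i : Fin (q + 1)) :
    g ∘ (i.succ).succAbove = Fin.cons (g 0) ((g ∘ Fin.succ) ∘ i.succAbove) := by
  funext j
  cases j using Fin.cases with
  | zero => simp
  | succ j => simp [Fin.succ_succAbove_succ]

lemma osMonomial_insert : ∀ {p : ℕ} (g : Fin (p + 1) → α) (j : Fin (p + 1)),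
    osMonomial K Mat g =
      ((-1 : ℤ) ^ (j : ℕ)) • (osE K Mat (g j) * osMonomial K Mat (g ∘ j.succAbove)) := by
  intro p
  induction p with
  | zero =>
    intro g j
    fin_cases j
    simp [Fin.succAbove_zero, ← osMonomial_cons, Fin.cons_self_tail]
    rfl
  | succ q ih =>
    intro g j
    cases j using Fin.cases with
    | zero =>
      have h0 : osMonomial K Mat g = osE K Mat (g 0) * osMonomial K Mat (g ∘ Fin.succ) := by
        rw [← osMonomial_cons]; congr 1; exact (Fin.cons_self_tail g).symm
      simpa [Fin.succAbove_zero] using h0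
    | succ i =>
      have h0 : osMonomial K Mat g = osE K Mat (g 0) * osMonomial K Mat (g ∘ Fin.succ) := by
        rw [← osMonomial_cons]; congr 1; exact (Fin.cons_self_tail g).symm
      rw [h0, ih (g ∘ Fin.succ) i, comp_succ_succAbove g i]
      rw [osMonomial_cons (K := K) Mat (g 0) ((g ∘ Fin.succ) ∘ i.succAbove)]
      rw [mul_smul_comm, ← mul_assoc, osE_anticomm, neg_mul, mul_assoc, smul_neg,
        ← neg_smul]
      have : (g ∘ Fin.succ) i = g i.succ := rfl
      rw [this]
      congr 1
      push_cast [Fin.val_succ]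
      ring

lemma osE_mul_osMonomial_of_mem {p : ℕ} (x : α) (g : Fin (p + 1) → α)
    (hx : x ∈ Set.range g) :
    osE K Mat x * osMonomial K Mat g = 0 := by
  obtain ⟨j, rfl⟩ := hx
  rw [osMonomial_insert (K := K) Mat g j, mul_smul_comm, ← mul_assoc, osE_sq,
    zero_mul, smul_zero]

end PartA
section PartB

variable {K : Type*} [Field K] {α : Type*}

lemma extBoundary_extGen_mul (s : α) (b : ExteriorAlgebra K (α →₀ K)) :
    extBoundary K α (extGen K s * b) = b - extGen K s * extBoundary K α b := by
  rw [extBoundary, extGen, CliffordAlgebra.contractLeft_ι_mul]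
  simp [Finsupp.linearCombination_single]

lemma extBoundary_prod : ∀ {q : ℕ} (f : Fin (q + 1) → α),
    extBoundary K α (List.ofFn fun i => extGen K (f i)).prod =
      ∑ i : Fin (q + 1), ((-1 : ℤ) ^ (i : ℕ)) •
        (List.ofFn fun j => extGen K (f (i.succAbove j))).prod := by
  intro q
  induction q with
  | zero =>
    intro f
    simp only [List.ofFn_succ, List.ofFn_zero, List.prod_cons, List.prod_nil, mul_one]
    rw [show (extGen K (f 0)) = extGen K (f 0) * 1 by rw [mul_one],
      extBoundary_extGen_mul]
    simp [extBoundary]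
  | succ q ih =>
    intro f
    rw [List.ofFn_succ, List.prod_cons]
    have hf0 : (fun i : Fin (q + 1) => extGen K (f i.succ)) =
        fun i => extGen K ((f ∘ Fin.succ) i) := rfl
    rw [hf0, extBoundary_extGen_mul, ih (f ∘ Fin.succ)]
    conv_rhs => rw [Fin.sum_univ_succ]
    have h0 : (List.ofFn fun j => extGen K (f ((0 : Fin (q + 2)).succAbove j))).prod =
        (List.ofFn fun j => extGen K ((f ∘ Fin.succ) j)).prod := by
      simp only [Fin.succAbove_zero]; rfl
    rw [h0]
    simp only [Fin.val_zero, pow_zero, one_smul]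
    rw [sub_eq_add_neg, add_comm]
    rw [add_comm ((List.ofFn fun j => extGen K ((f ∘ Fin.succ) j)).prod)]
    congr 1
    rw [Finset.mul_sum, ← Finset.sum_neg_distrib]
    apply Finset.sum_congr rfl
    intro i _
    rw [mul_smul_comm]
    have harg : (fun j => extGen K (f ((i.succ).succAbove j))) =
        fun j => extGen K ((Fin.cons (f 0) ((f ∘ Fin.succ) ∘ i.succAbove) : Fin (q+1) → α) j) := by
      funext j
      rw [show f ((i.succ).succAbove j) = (f ∘ (i.succ).succAbove) j from rfl,
        comp_succ_succAbove f i]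
    rw [harg]
    have hcons : (List.ofFn fun j =>
        extGen K ((Fin.cons (f 0) ((f ∘ Fin.succ) ∘ i.succAbove) : Fin (q+1) → α) j)).prod =
        extGen K (f 0) * (List.ofFn fun j => extGen K (((f ∘ Fin.succ) ∘ i.succAbove) j)).prod := by
      rw [List.ofFn_succ, List.prod_cons]
      simp
    have hsign : ((-1:ℤ) ^ ((i.succ : Fin (q+2)) : ℕ)) = -(-1:ℤ) ^ (i : ℕ) := by
      push_cast [Fin.val_succ]; ring
    rw [hcons, hsign, neg_smul, neg_inj]
    simp only [Function.comp_apply]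

variable (Mat : Matroid α)

set_option synthInstance.maxHeartbeats 400000 in
lemma osRel_sum_eq_zero {q : ℕ} (f : Fin (q + 1) → α) (hinj : Function.Injective f)
    (hdep : ¬ Mat.Indep (Set.range f)) :
    ∑ i : Fin (q + 1), ((-1 : ℤ) ^ (i : ℕ)) • osMonomial K Mat (f ∘ i.succAbove) = 0 := by
  have hrel : osRel K Mat (extBoundary K α (List.ofFn fun i => extGen K (f i)).prod) 0 :=
    ⟨rfl, q + 1, f, hinj, hdep, rfl⟩
  have h0 := RingQuot.mkRingHom_rel hrel
  rw [map_zero, extBoundary_prod, map_sum] at h0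
  rw [← h0]
  apply Finset.sum_congr rfl
  intro i _
  rw [zsmul_eq_mul, zsmul_eq_mul, map_mul, map_intCast]
  congr 1
  rw [osMonomial]
  conv_rhs => rw [map_list_prod (RingQuot.mkRingHom (osRel K Mat)), List.map_ofFn]
  rfl

lemma osMonomial_eq_sum_of_dep {p : ℕ} (x : α) (g : Fin (p + 1) → α)
    (hx : x ∉ Set.range g) (hinj : Function.Injective g)
    (hdep : ¬ Mat.Indep (insert x (Set.range g))) :
    osMonomial K Mat g = ∑ k : Fin (p + 1),
      ((-1 : ℤ) ^ (k : ℕ)) • (osE K Mat x * osMonomial K Mat (g ∘ k.succAbove)) := by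
  have hinj' : Function.Injective (Fin.cons x g : Fin (p + 2) → α) :=
    Fin.cons_injective_iff.2 ⟨hx, hinj⟩
  have hdep' : ¬ Mat.Indep (Set.range (Fin.cons x g : Fin (p + 2) → α)) := by
    rwa [Fin.range_cons]
  have h := osRel_sum_eq_zero (K := K) Mat (Fin.cons x g) hinj' hdep'
  rw [Fin.sum_univ_succ] at h
  have h0 : (Fin.cons x g : Fin (p+2) → α) ∘ (0 : Fin (p + 2)).succAbove = g := by
    funext j; simp [Fin.succAbove_zero]
  have hsucc : ∀ k : Fin (p + 1), (Fin.cons x g : Fin (p+2) → α) ∘ (k.succ).succAbove =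
      Fin.cons x (g ∘ k.succAbove) := by
    intro k
    rw [comp_succ_succAbove (Fin.cons x g) k]
    try rfl
    try (congr 1 <;> funext j <;> simp)
  rw [h0] at h
  simp only [Fin.val_zero, pow_zero, one_smul] at h
  have heq : ∑ k : Fin (p + 1), ((-1 : ℤ) ^ ((k.succ : Fin (p+2)) : ℕ)) •
      osMonomial K Mat ((Fin.cons x g : Fin (p+2) → α) ∘ (k.succ).succAbove) =
      - ∑ k : Fin (p + 1), ((-1 : ℤ) ^ (k : ℕ)) •
        (osE K Mat x * osMonomial K Mat (g ∘ k.succAbove)) := by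
    rw [← Finset.sum_neg_distrib]
    apply Finset.sum_congr rfl
    intro k _
    have hsign : ((-1:ℤ) ^ ((k.succ : Fin (p+2)) : ℕ)) = -(-1:ℤ) ^ (k : ℕ) := by
      push_cast [Fin.val_succ]; ring
    rw [hsucc k, osMonomial_cons, hsign, neg_smul]
  rw [heq, ← sub_eq_add_neg] at h
  exact sub_eq_zero.mp h

lemma osE_mul_osMonomial_of_dep {p : ℕ} (x : α) (g : Fin (p + 1) → α)
    (hx : x ∉ Set.range g) (hinj : Function.Injective g)
    (hdep : ¬ Mat.Indep (insert x (Set.range g))) :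
    osE K Mat x * osMonomial K Mat g = 0 := by
  rw [osMonomial_eq_sum_of_dep (K := K) Mat x g hx hinj hdep, Finset.mul_sum]
  rw [show (0 : OSAlgebra K Mat) = ∑ _k : Fin (p+1), (0 : OSAlgebra K Mat) by simp]
  apply Finset.sum_congr rfl
  intro k _
  rw [mul_smul_comm, ← mul_assoc, osE_sq, zero_mul, smul_zero]

lemma osE_mul_osMonomial_of_mem_closure {p : ℕ} (x : α) (g : Fin (p + 1) → α)
    (hx : x ∈ Mat.closure (Set.range g)) (hinj : Function.Injective g)
    (hind : Mat.Indep (Set.range g)) :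
    osE K Mat x * osMonomial K Mat g = 0 := by
  by_cases hmem : x ∈ Set.range g
  · exact osE_mul_osMonomial_of_mem (K := K) Mat x g hmem
  · apply osE_mul_osMonomial_of_dep (K := K) Mat x g hmem hinj
    intro hind'
    rw [hind.mem_closure_iff] at hx
    rcases hx with hdep | hmem'
    · exact hdep.1 hind'
    · exact hmem hmem'

lemma key_sum_lemma {p : ℕ} (x : α) (h : Fin (p + 1) → α)
    (hinj : Function.Injective h) (hind : Mat.Indep (Set.range h))
    (hx : x ∈ Mat.closure (Set.range h)) :
    ∑ k : Fin (p + 1), ((-1 : ℤ) ^ (k : ℕ)) •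
      (osE K Mat x * osMonomial K Mat (h ∘ k.succAbove)) = osMonomial K Mat h := by
  by_cases hmem : x ∈ Set.range h
  · obtain ⟨j, rfl⟩ := hmem
    rw [Finset.sum_eq_single j]
    · exact (osMonomial_insert (K := K) Mat h j).symm
    · intro k _ hk
      cases p with
      | zero =>
        have hk1 := k.isLt
        have hj1 := j.isLt
        exact absurd (Fin.ext (by omega)) hk
      | succ p' =>
        have hjk : h j ∈ Set.range (h ∘ k.succAbove) := by
          obtain ⟨z, hz⟩ := Fin.exists_succAbove_eq (Ne.symm hk)
          exact ⟨z, by rw [Function.comp_apply, hz]⟩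
        rw [osE_mul_osMonomial_of_mem (K := K) Mat _ _ hjk, smul_zero]
    · intro hj; exact absurd (Finset.mem_univ j) hj
  · have hdep : ¬ Mat.Indep (insert x (Set.range h)) := by
      intro hind'
      rw [hind.mem_closure_iff] at hx
      rcases hx with hdep | hmem'
      · exact hdep.1 hind'
      · exact hmem hmem'
    exact (osMonomial_eq_sum_of_dep (K := K) Mat x h hmem hinj hdep).symm

end PartB
section PartC

open scoped Classical

variable {α : Type*} [Fintype α] [LinearOrder α]

/-- Minimum of a set (with default). -/
noncomputable def dmin (S : Set α) (y : α) : α :=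
  if h : (Set.toFinite S).toFinset.Nonempty then (Set.toFinite S).toFinset.min' h else y

lemma dmin_mem {S : Set α} (hS : S.Nonempty) (y : α) : dmin S y ∈ S := by
  rw [dmin, dif_pos ((Set.Finite.toFinset_nonempty _).2 hS)]
  have := Finset.min'_mem (Set.toFinite S).toFinset ((Set.Finite.toFinset_nonempty _).2 hS)
  rwa [Set.Finite.mem_toFinset] at this

lemma dmin_le {S : Set α} {b : α} (hb : b ∈ S) (y : α) : dmin S y ≤ b := by
  have hS : S.Nonempty := ⟨b, hb⟩
  rw [dmin, dif_pos ((Set.Finite.toFinset_nonempty _).2 hS)]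
  exact Finset.min'_le _ _ ((Set.Finite.mem_toFinset _).2 hb)

lemma dmin_of_empty {S : Set α} (hS : ¬ S.Nonempty) (y : α) : dmin S y = y := by
  rw [dmin, dif_neg (fun h => hS ((Set.Finite.toFinset_nonempty _).1 h))]

lemma dmin_eq {S : Set α} {a : α} (ha : a ∈ S) (hmin : ∀ b ∈ S, a ≤ b) (y : α) :
    dmin S y = a :=
  le_antisymm (dmin_le ha y) (hmin _ (dmin_mem ⟨a, ha⟩ y))

lemma flagTuple_def (Mat : Matroid α) {p : ℕ} (g : Fin p → α) (i : Fin p) :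
    flagTuple Mat g i =
      dmin (Mat.closure (g '' {j | i ≤ j}) \ Mat.closure (g '' {j | i < j})) (g i) := rfl

section Simple

variable {Mat : Matroid α} (hE : Mat.E = Set.univ) (hsimple : ∀ s t : α, Mat.Indep {s, t})

include hsimple in
lemma indep_singleton' (a : α) : Mat.Indep {a} := by
  have := hsimple a a
  rwa [Set.pair_eq_singleton] at this

include hE hsimple in
lemma isNBC_subsingleton {S : Set α} (hS : S.Subsingleton) : IsNBC Mat S := by
  rintro C hC ⟨a, haC, hlt, hcirc⟩
  rcases (hS.anti hC).eq_empty_or_singleton with rfl | ⟨c, rfl⟩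
  · have he : insert a (∅ : Set α) = {a} := by simp
    rw [he] at hcirc
    exact hcirc.1 (indep_singleton' hsimple a)
  · exact hcirc.1 (hsimple a c)

include hE hsimple in
lemma closure_singleton_simple (x : α) : Mat.closure {x} = {x} := by
  apply le_antisymm
  · intro s hs
    rw [(indep_singleton' hsimple x).mem_closure_iff] at hs
    rcases hs with hdep | hmem
    · exact absurd (hsimple s x) hdep.1
    · exact hmem
  · exact Mat.subset_closure _ (by rw [hE]; exact Set.subset_univ _)

include hE hsimple in
lemma not_mem_closure_empty (a : α) : a ∉ Mat.closure (∅ : Set α) := by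
  intro ha
  rw [Mat.empty_indep.mem_closure_iff] at ha
  rcases ha with hdep | hmem
  · have he : insert a (∅ : Set α) = {a} := by simp
    rw [he] at hdep
    exact hdep.1 (indep_singleton' hsimple a)
  · exact hmem

include hE in
lemma isNBC_insert_of_min {X Y : Set α} (hYX : Mat.closure Y ⊆ Mat.closure X)
    {R : Set α} (hR : R ⊆ Mat.closure Y)
    {a : α} (ha1 : a ∈ Mat.closure X) (ha2 : a ∉ Mat.closure Y)
    (hamin : ∀ b ∈ Mat.closure X, b < a → b ∈ Mat.closure Y)
    (hnbc : IsNBC Mat R) : IsNBC Mat (insert a R) := by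
  rintro C hC ⟨b, hbC, hblt, hcirc⟩
  by_cases haC : a ∈ C
  · have hba : b < a := hblt a haC
    have hCE : insert b C ⊆ Mat.E := by rw [hE]; exact Set.subset_univ _
    have hCX : C ⊆ Mat.closure X := by
      intro c hc
      rcases hC hc with rfl | hcR
      · exact ha1
      · exact hYX (hR hcR)
    have hbX : b ∈ Mat.closure X := by
      have hCind : Mat.Indep C := hcirc.2 C (Set.ssubset_insert hbC)
      have hdep : Mat.Dep (insert b C) := ⟨hcirc.1, hCE⟩
      have : b ∈ Mat.closure C := hCind.mem_closure_iff.2 (Or.inl hdep)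
      exact Mat.closure_subset_closure_of_subset_closure hCX this
    have hbY : b ∈ Mat.closure Y := hamin b hbX hba
    -- now derive a ∈ closure Y, contradiction
    have hD : Mat.Indep (insert b C \ {a}) :=
      hcirc.2 _ (Set.sdiff_singleton_ssubset.2 (Set.mem_insert_of_mem _ haC))
    have haD : a ∉ insert b C \ {a} := fun h => h.2 rfl
    have hins : insert a (insert b C \ {a}) = insert b C := by
      rw [Set.insert_diff_singleton, Set.insert_eq_self.2 (Set.mem_insert_of_mem _ haC)]
    have hdep : Mat.Dep (insert a (insert b C \ {a})) := by
      rw [hins]; exact ⟨hcirc.1, hCE⟩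
    have haclD : a ∈ Mat.closure (insert b C \ {a}) :=
      hD.mem_closure_iff.2 (Or.inl hdep)
    have hDY : insert b C \ {a} ⊆ Mat.closure Y := by
      intro c hc
      rcases hc.1 with rfl | hcC
      · exact hbY
      · rcases hC hcC with rfl | hcR
        · exact absurd rfl hc.2
        · exact hR hcR
    exact ha2 (Mat.closure_subset_closure_of_subset_closure hDY haclD)
  · exact hnbc C ((Set.subset_insert_iff_of_notMem haC).1 hC) ⟨b, hbC, hblt, hcirc⟩

end Simple

lemma strictMono_cons_iff {p : ℕ} {a : α} {f : Fin (p+1) → α} :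
    StrictMono (Fin.cons a f : Fin (p+2) → α) ↔ a < f 0 ∧ StrictMono f := by
  rw [Fin.strictMono_iff_lt_succ, Fin.strictMono_iff_lt_succ]
  constructor
  · intro H
    refine ⟨by simpa using H 0, fun i => ?_⟩
    have := H i.succ
    rwa [← Fin.succ_castSucc, Fin.cons_succ, Fin.cons_succ] at this
  · rintro ⟨h0, H⟩ i
    cases i using Fin.cases with
    | zero => simpa using h0
    | succ i =>
      rw [← Fin.succ_castSucc, Fin.cons_succ, Fin.cons_succ]
      exact H i

section ConsImages

variable {p : ℕ} (x : α) (w : Fin (p+1) → α)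

lemma cons_image_zero_le :
    (Fin.cons x w : Fin (p+2) → α) '' {j | (0 : Fin (p+2)) ≤ j} = insert x (Set.range w) := by
  have h : {j : Fin (p+2) | (0 : Fin (p+2)) ≤ j} = Set.univ := by
    ext j; simp [Fin.zero_le]
  rw [h, Set.image_univ, Fin.range_cons]

lemma cons_image_zero_lt :
    (Fin.cons x w : Fin (p+2) → α) '' {j | (0 : Fin (p+2)) < j} = Set.range w := by
  ext b
  simp only [Set.mem_image, Set.mem_setOf_eq, Set.mem_range]
  constructor
  · rintro ⟨j, hj, rfl⟩
    cases j using Fin.cases with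
    | zero => exact absurd hj (lt_irrefl _)
    | succ k => exact ⟨k, by simp⟩
  · rintro ⟨k, rfl⟩
    exact ⟨k.succ, k.succ_pos, by simp⟩

lemma cons_image_succ_le (i : Fin (p+1)) :
    (Fin.cons x w : Fin (p+2) → α) '' {j | i.succ ≤ j} = w '' {j | i ≤ j} := by
  ext b
  simp only [Set.mem_image, Set.mem_setOf_eq]
  constructor
  · rintro ⟨j, hj, rfl⟩
    cases j using Fin.cases with
    | zero => exact absurd (le_antisymm hj (Fin.zero_le _)) (Fin.succ_ne_zero i)
    | succ k => exact ⟨k, Fin.succ_le_succ_iff.1 hj, by simp⟩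
  · rintro ⟨k, hk, rfl⟩
    exact ⟨k.succ, Fin.succ_le_succ_iff.2 hk, by simp⟩

lemma cons_image_succ_lt (i : Fin (p+1)) :
    (Fin.cons x w : Fin (p+2) → α) '' {j | i.succ < j} = w '' {j | i < j} := by
  ext b
  simp only [Set.mem_image, Set.mem_setOf_eq]
  constructor
  · rintro ⟨j, hj, rfl⟩
    cases j using Fin.cases with
    | zero => exact absurd (lt_of_le_of_lt (Fin.zero_le _) hj) (lt_irrefl _)
    | succ k => exact ⟨k, Fin.succ_lt_succ_iff.1 hj, by simp⟩
  · rintro ⟨k, hk, rfl⟩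
    exact ⟨k.succ, Fin.succ_lt_succ_iff.2 hk, by simp⟩

lemma flagTuple_cons_succ (Mat : Matroid α) (i : Fin (p+1)) :
    flagTuple Mat (Fin.cons x w : Fin (p+2) → α) i.succ = flagTuple Mat w i := by
  rw [flagTuple_def, flagTuple_def, cons_image_succ_le, cons_image_succ_lt, Fin.cons_succ]

lemma flagTuple_cons_zero (Mat : Matroid α) :
    flagTuple Mat (Fin.cons x w : Fin (p+2) → α) 0 =
      dmin (Mat.closure (insert x (Set.range w)) \ Mat.closure (Set.range w)) x := by
  rw [flagTuple_def, cons_image_zero_le, cons_image_zero_lt, Fin.cons_zero]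

end ConsImages

lemma flagTuple_range_subset (Mat : Matroid α) (hE : Mat.E = Set.univ) {p : ℕ}
    (w : Fin p → α) :
    Set.range (flagTuple Mat w) ⊆ Mat.closure (Set.range w) := by
  rintro _ ⟨i, rfl⟩
  rw [flagTuple_def]
  by_cases hS : (Mat.closure (w '' {j | i ≤ j}) \ Mat.closure (w '' {j | i < j})).Nonempty
  · have hmem := dmin_mem hS (w i)
    exact Mat.closure_subset_closure (Set.image_subset_range _ _) hmem.1
  · rw [dmin_of_empty hS]
    exact Mat.subset_closure _ (by rw [hE]; exact Set.subset_univ _) ⟨i, rfl⟩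

end PartC
section PartD

open Equiv

/-- The decomposition permutation: `0 ↦ k`, `succ i ↦ k.succAbove (τ i)`. -/
def permPhi {p : ℕ} (kτ : Fin (p+1) × Perm (Fin p)) : Perm (Fin (p+1)) :=
  (Fin.cycleRange kτ.1)⁻¹ * (Equiv.Perm.decomposeFin.symm (0, kτ.2))

lemma permPhi_zero {p : ℕ} (k : Fin (p+1)) (τ : Perm (Fin p)) : permPhi (k, τ) 0 = k := by
  simp only [permPhi, Perm.mul_apply, Equiv.Perm.decomposeFin_symm_apply_zero,
    Perm.inv_def]
  exact Fin.cycleRange_symm_zero k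

lemma permPhi_succ {p : ℕ} (k : Fin (p+1)) (τ : Perm (Fin p)) (i : Fin p) :
    permPhi (k, τ) i.succ = k.succAbove (τ i) := by
  simp only [permPhi, Perm.mul_apply, Equiv.Perm.decomposeFin_symm_apply_succ,
    Perm.inv_def, Equiv.swap_self, Equiv.refl_apply]
  exact Fin.cycleRange_symm_succ k (τ i)

lemma comp_permPhi {α : Type*} {p : ℕ} (h : Fin (p+1) → α) (k : Fin (p+1))
    (τ : Perm (Fin p)) :
    h ∘ (permPhi (k, τ)) = Fin.cons (h k) ((h ∘ k.succAbove) ∘ τ) := by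
  funext j
  cases j using Fin.cases with
  | zero => simp [permPhi_zero]
  | succ i => simp [permPhi_succ]

lemma sign_permPhi {p : ℕ} (k : Fin (p+1)) (τ : Perm (Fin p)) :
    (Equiv.Perm.sign (permPhi (k, τ)) : ℤ) = (-1) ^ (k : ℕ) * (Equiv.Perm.sign τ : ℤ) := by
  rw [permPhi, map_mul, map_inv, Fin.sign_cycleRange, Equiv.Perm.decomposeFin.symm_sign,
    if_pos rfl]
  push_cast
  rw [Int.units_inv_eq_self]
  simp [Units.val_pow_eq_pow_val]

lemma permPhi_bijective {p : ℕ} : Function.Bijective (permPhi (p := p)) := by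
  rw [Fintype.bijective_iff_injective_and_card]
  constructor
  · rintro ⟨k, τ⟩ ⟨k', τ'⟩ hkk
    have hk : k = k' := by
      rw [← permPhi_zero k τ, ← permPhi_zero k' τ', hkk]
    subst hk
    have h2 : (Equiv.Perm.decomposeFin.symm (0, τ) : Perm (Fin (p+1))) =
        Equiv.Perm.decomposeFin.symm (0, τ') := by
      have := mul_left_cancel (a := (Fin.cycleRange k)⁻¹)
        (b := (Equiv.Perm.decomposeFin.symm (0, τ) : Perm (Fin (p+1))))
        (c := Equiv.Perm.decomposeFin.symm (0, τ')) hkk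
      exact this
    have := Equiv.Perm.decomposeFin.symm.injective h2
    rw [Prod.mk.injEq] at this
    rw [this.2]
  · rw [Fintype.card_prod, Fintype.card_perm, Fintype.card_perm, Fintype.card_fin,
      Fintype.card_fin, Nat.factorial_succ]

lemma sum_perm_decompose {M : Type*} [AddCommMonoid M] {p : ℕ}
    (f : Perm (Fin (p+1)) → M) :
    ∑ σ : Perm (Fin (p+1)), f σ = ∑ k : Fin (p+1), ∑ τ : Perm (Fin p), f (permPhi (k, τ)) := by
  calc ∑ σ : Perm (Fin (p+1)), f σ
      = ∑ kτ : Fin (p+1) × Perm (Fin p), f (permPhi kτ) :=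
        (Fintype.sum_bijective permPhi permPhi_bijective _ _ (fun kτ => rfl)).symm
    _ = ∑ k : Fin (p+1), ∑ τ : Perm (Fin p), f (permPhi (k, τ)) := Fintype.sum_prod_type _

section FlagCons

variable {K : Type*} [Field K] {α : Type*} [Fintype α] [LinearOrder α]
variable {Mat : Matroid α} (hE : Mat.E = Set.univ) (hsimple : ∀ s t : α, Mat.Indep {s, t})

include hE hsimple in
lemma flagMonomial_cons {p : ℕ} (x : α) (w : Fin (p+1) → α)
    (hw_ind : Mat.Indep (Set.range w)) (hx_cl : x ∉ Mat.closure (Set.range w)) :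
    flagMonomial K Mat (Fin.cons x w : Fin (p+2) → α) =
      if StrictMono (flagTuple Mat w) ∧ IsNBC Mat (Set.range (flagTuple Mat w))
          ∧ dmin (Mat.closure (insert x (Set.range w)) \ Mat.closure (Set.range w)) x
              < flagTuple Mat w 0 then
        osE K Mat (dmin (Mat.closure (insert x (Set.range w)) \ Mat.closure (Set.range w)) x)
          * osMonomial K Mat (flagTuple Mat w)
      else 0 := by
  set S : Set α := Mat.closure (insert x (Set.range w)) \ Mat.closure (Set.range w) with hSdef
  set a : α := dmin S x with hadef
  have hxS : x ∈ S := ⟨Mat.subset_closure _ (by rw [hE]; exact Set.subset_univ _)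
      (Set.mem_insert _ _), hx_cl⟩
  have haS : a ∈ S := dmin_mem ⟨x, hxS⟩ x
  have hflag : flagTuple Mat (Fin.cons x w : Fin (p+2) → α) =
      Fin.cons a (flagTuple Mat w) := by
    funext j
    cases j using Fin.cases with
    | zero => rw [flagTuple_cons_zero, Fin.cons_zero]
    | succ i => rw [flagTuple_cons_succ, Fin.cons_succ]
  have hrange : Set.range (Fin.cons a (flagTuple Mat w) : Fin (p+2) → α) =
      insert a (Set.range (flagTuple Mat w)) := Fin.range_cons _ _
  have hNBCiff : IsNBC Mat (insert a (Set.range (flagTuple Mat w))) ↔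
      IsNBC Mat (Set.range (flagTuple Mat w)) := by
    constructor
    · intro hn C hC hb
      exact hn C (hC.trans (Set.subset_insert _ _)) hb
    · intro hn
      apply isNBC_insert_of_min hE
        (Mat.closure_subset_closure (Set.subset_insert x (Set.range w)))
        (flagTuple_range_subset Mat hE w) haS.1 haS.2 ?_ hn
      intro b hb hba
      by_contra hbY
      exact absurd (dmin_le (S := S) (⟨hb, hbY⟩ : b ∈ S) x) (not_le.2 hba)
  simp only [flagMonomial]
  rw [hflag, hrange, osMonomial_cons]
  by_cases h1 : StrictMono (flagTuple Mat w)
  · by_cases h2 : IsNBC Mat (Set.range (flagTuple Mat w))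
    · by_cases h3 : a < flagTuple Mat w 0
      · rw [if_pos ⟨strictMono_cons_iff.2 ⟨h3, h1⟩, hNBCiff.2 h2⟩, if_pos ⟨h1, h2, h3⟩]
      · rw [if_neg (fun hcon => h3 (strictMono_cons_iff.1 hcon.1).1),
          if_neg (fun hcon => h3 hcon.2.2)]
    · rw [if_neg (fun hcon => h2 (hNBCiff.1 hcon.2)), if_neg (fun hcon => h2 hcon.2.1)]
  · rw [if_neg (fun hcon => h1 (strictMono_cons_iff.1 hcon.1).2),
      if_neg (fun hcon => h1 hcon.1)]

include hE hsimple in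
lemma cut_term_cons {p : ℕ} (x : α) (w : Fin (p+1) → α)
    (hw_ind : Mat.Indep (Set.range w)) (hx_cl : x ∉ Mat.closure (Set.range w))
    (c : WithTop α) :
    (if ((flagTuple Mat (Fin.cons x w : Fin (p+2) → α) 0 : α) : WithTop α) ≤ c then
        flagMonomial K Mat (Fin.cons x w : Fin (p+2) → α) else 0)
    = if (((dmin (Mat.closure (insert x (Set.range w)) \ Mat.closure (Set.range w)) x : α)
          : WithTop α) ≤ c) then
        osE K Mat (dmin (Mat.closure (insert x (Set.range w)) \ Mat.closure (Set.range w)) x)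
          * (flagMonomial K Mat w -
            (if ((flagTuple Mat w 0 : α) : WithTop α) ≤
                ((dmin (Mat.closure (insert x (Set.range w)) \ Mat.closure (Set.range w)) x
                  : α) : WithTop α) then flagMonomial K Mat w else 0))
      else 0 := by
  set S : Set α := Mat.closure (insert x (Set.range w)) \ Mat.closure (Set.range w) with hSdef
  set a : α := dmin S x with hadef
  rw [flagTuple_cons_zero, flagMonomial_cons hE hsimple x w hw_ind hx_cl]
  by_cases hc : ((a : WithTop α) ≤ c)
  · rw [if_pos hc, if_pos hc]
    by_cases h12 : StrictMono (flagTuple Mat w) ∧ IsNBC Mat (Set.range (flagTuple Mat w))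
    · have hfmw : flagMonomial K Mat w = osMonomial K Mat (flagTuple Mat w) := by
        simp only [flagMonomial]; rw [if_pos h12]
      by_cases h3 : a < flagTuple Mat w 0
      · rw [if_pos ⟨h12.1, h12.2, h3⟩, if_neg (by
          rw [WithTop.coe_le_coe]; exact not_le.2 h3), sub_zero, hfmw]
      · rw [if_neg (fun hcon => h3 hcon.2.2), if_pos (by
          rw [WithTop.coe_le_coe]; exact not_lt.1 h3), sub_self, mul_zero]
    · have hfmw : flagMonomial K Mat w = 0 := by
        simp only [flagMonomial]; rw [if_neg h12]
      rw [if_neg (fun hcon => h12 ⟨hcon.1, hcon.2.1⟩), hfmw]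
      rw [ite_self (0 : OSAlgebra K Mat), sub_zero, mul_zero]
  · rw [if_neg hc, if_neg hc]

end FlagCons

end PartD
section PartE

open Equiv

variable {K : Type*} [Field K] {α : Type*} [Fintype α] [LinearOrder α]

lemma sum_ite_smul {M : Type*} [AddCommGroup M] {ι : Type*} [Fintype ι]
    (P : Prop) [Decidable P] (f : ι → ℤ) (g : ι → M) :
    ∑ i, f i • (if P then g i else 0) = if P then ∑ i, f i • g i else 0 := by
  by_cases hP : P <;> simp [hP]

lemma sum_smul_ite_mul {R : Type*} [Ring R] {ι : Type*} [Fintype ι]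
    (P : Prop) [Decidable P] (e : R) (f : ι → ℤ) (X Y : ι → R) :
    ∑ i, f i • (if P then e * (X i - Y i) else 0)
      = if P then e * ((∑ i, f i • X i) - (∑ i, f i • Y i)) else 0 := by
  by_cases hP : P
  · simp only [if_pos hP]
    rw [← Finset.sum_sub_distrib, Finset.mul_sum]
    apply Finset.sum_congr rfl
    intro i _
    rw [← smul_sub, mul_smul_comm]
  · simp [hP]

variable (Mat : Matroid α) (hE : Mat.E = Set.univ) (hsimple : ∀ s t : α, Mat.Indep {s, t})

include hE hsimple in
theorem cutW : ∀ (p : ℕ) (h : Fin (p+1) → α),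
    Function.Injective h → Mat.Indep (Set.range h) → ∀ c : WithTop α,
    (∑ σ : Equiv.Perm (Fin (p+1)), ((Equiv.Perm.sign σ : ℤ) •
        (if ((flagTuple Mat (h ∘ σ) 0 : α) : WithTop α) ≤ c then
          flagMonomial K Mat (h ∘ σ) else 0)))
      = if ((dmin (Mat.closure (Set.range h)) (h 0) : α) : WithTop α) ≤ c then
          osMonomial K Mat h else 0 := by
  intro p
  induction p with
  | zero =>
    intro h _hinj _hind c
    haveI : Subsingleton (Fin (0+1)) := ⟨fun a b => Fin.ext (by omega)⟩
    haveI : Subsingleton (Equiv.Perm (Fin (0+1))) :=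
      ⟨fun a b => Equiv.ext (fun x => Subsingleton.elim _ _)⟩
    rw [Fintype.sum_subsingleton _ (1 : Equiv.Perm (Fin (0+1)))]
    have hcomp : h ∘ (1 : Equiv.Perm (Fin (0+1))) = h := by
      funext j; simp
    rw [hcomp, map_one]
    have hrange : Set.range h = {h 0} := by
      ext b
      constructor
      · rintro ⟨j, rfl⟩
        rw [Subsingleton.elim j 0]; rfl
      · rintro rfl; exact ⟨0, rfl⟩
    have hflag : flagTuple Mat h = h := by
      funext i
      rw [Subsingleton.elim i 0, flagTuple_def]
      have h1 : h '' {j | (0 : Fin (0+1)) ≤ j} = {h 0} := by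
        rw [show {j : Fin (0+1) | (0 : Fin (0+1)) ≤ j} = Set.univ from by
          ext j; simp [Fin.zero_le], Set.image_univ, hrange]
      have h2 : h '' {j | (0 : Fin (0+1)) < j} = ∅ := by
        rw [show {j : Fin (0+1) | (0 : Fin (0+1)) < j} = ∅ from by
          ext j; simp [Subsingleton.elim j 0], Set.image_empty]
      rw [h1, h2, closure_singleton_simple hE hsimple]
      apply dmin_eq
      · exact ⟨Set.mem_singleton _, not_mem_closure_empty hE hsimple (h 0)⟩
      · rintro b ⟨hb, _⟩
        exact (Set.mem_singleton_iff.1 hb).ge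
    have hmono : StrictMono (flagTuple Mat h) := by
      intro a b hab
      rw [Subsingleton.elim a b] at hab
      exact absurd hab (lt_irrefl b)
    have hnbc : IsNBC Mat (Set.range (flagTuple Mat h)) := by
      apply isNBC_subsingleton hE hsimple
      rw [hflag, hrange]
      exact Set.subsingleton_singleton
    have hfm : flagMonomial K Mat h = osMonomial K Mat h := by
      simp only [flagMonomial]
      rw [if_pos ⟨hmono, hnbc⟩, hflag]
    have hdm : dmin (Mat.closure (Set.range h)) (h 0) = h 0 := by
      rw [hrange, closure_singleton_simple hE hsimple]
      exact dmin_eq (Set.mem_singleton _) (fun b hb => (Set.mem_singleton_iff.1 hb).ge) (h 0)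
    have hft0 : flagTuple Mat h 0 = h 0 := by rw [hflag]
    rw [hfm, hdm, hft0, Units.val_one, one_smul]
  | succ p ih =>
    intro h hinj hind c
    rw [sum_perm_decompose (fun σ => ((Equiv.Perm.sign σ : ℤ) •
        (if ((flagTuple Mat (h ∘ σ) 0 : α) : WithTop α) ≤ c then
          flagMonomial K Mat (h ∘ σ) else 0)))]
    have hrmem : h 0 ∈ Set.range h := ⟨0, rfl⟩
    have hm0ne : (Mat.closure (Set.range h)).Nonempty :=
      ⟨h 0, Mat.subset_closure (Set.range h) (by rw [hE]; exact Set.subset_univ _) hrmem⟩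
    set m₀ : α := dmin (Mat.closure (Set.range h)) (h 0) with hm₀def
    have hm₀mem : m₀ ∈ Mat.closure (Set.range h) := dmin_mem hm0ne (h 0)
    have hstep : ∀ k : Fin (p+2),
        (∑ τ : Equiv.Perm (Fin (p+1)), ((Equiv.Perm.sign (permPhi (k, τ)) : ℤ) •
          (if ((flagTuple Mat (h ∘ permPhi (k, τ)) 0 : α) : WithTop α) ≤ c then
            flagMonomial K Mat (h ∘ permPhi (k, τ)) else 0)))
        = ((-1 : ℤ) ^ (k : ℕ)) • (if ((m₀ : α) : WithTop α) ≤ c then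
            (if m₀ ∈ Mat.closure (Set.range (h ∘ k.succAbove)) then 0
              else osE K Mat m₀ * osMonomial K Mat (h ∘ k.succAbove)) else 0) := by
      intro k
      set gk : Fin (p+1) → α := h ∘ k.succAbove with hgkdef
      have hginj : Function.Injective gk := hinj.comp Fin.succAbove_right_injective
      have hrange_gk : Set.range gk = Set.range h \ {h k} := by
        rw [hgkdef, Set.range_comp, Fin.range_succAbove]
        ext b
        simp only [Set.mem_image, Set.mem_compl_iff, Set.mem_singleton_iff, Set.mem_diff,
          Set.mem_range]
        constructor
        · rintro ⟨m, hm, rfl⟩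
          exact ⟨⟨m, rfl⟩, fun he => hm (hinj he)⟩
        · rintro ⟨⟨m, rfl⟩, hne⟩
          exact ⟨m, fun he => hne (congrArg h he), rfl⟩
      have hg_ind : Mat.Indep (Set.range gk) := hind.subset (by
        rw [hrange_gk]; exact Set.diff_subset)
      have hk_not : h k ∉ Mat.closure (Set.range gk) := by
        rw [hrange_gk]
        exact hind.notMem_closure_sdiff_of_mem ⟨k, rfl⟩
      have hkr : h k ∈ Set.range h := ⟨k, rfl⟩
      have hins : insert (h k) (Set.range gk) = Set.range h := by
        rw [hrange_gk, Set.insert_diff_singleton, Set.insert_eq_self.2 hkr]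
      have haknem : (Mat.closure (Set.range h) \ Mat.closure (Set.range gk)).Nonempty :=
        ⟨h k, ⟨Mat.subset_closure (Set.range h) (by rw [hE]; exact Set.subset_univ _) hkr,
          hk_not⟩⟩
      set ak : α := dmin (Mat.closure (Set.range h) \ Mat.closure (Set.range gk)) (h k)
        with hakdef
      have hak_mem := dmin_mem haknem (h k)
      have hstep1 : (∑ τ : Equiv.Perm (Fin (p+1)), ((Equiv.Perm.sign (permPhi (k, τ)) : ℤ) •
          (if ((flagTuple Mat (h ∘ permPhi (k, τ)) 0 : α) : WithTop α) ≤ c then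
            flagMonomial K Mat (h ∘ permPhi (k, τ)) else 0)))
          = ((-1 : ℤ) ^ (k : ℕ)) • ∑ τ : Equiv.Perm (Fin (p+1)), ((Equiv.Perm.sign τ : ℤ) •
            (if ((ak : α) : WithTop α) ≤ c then
              osE K Mat ak * (flagMonomial K Mat (gk ∘ τ) -
                (if ((flagTuple Mat (gk ∘ τ) 0 : α) : WithTop α) ≤ ((ak : α) : WithTop α)
                  then flagMonomial K Mat (gk ∘ τ) else 0)) else 0)) := by
        rw [Finset.smul_sum]
        apply Finset.sum_congr rfl
        intro τ _
        have hw_ind : Mat.Indep (Set.range (gk ∘ τ)) := by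
          rwa [(τ.surjective).range_comp gk]
        have hx_cl : h k ∉ Mat.closure (Set.range (gk ∘ τ)) := by
          rwa [(τ.surjective).range_comp gk]
        rw [comp_permPhi h k τ, sign_permPhi, mul_smul,
          cut_term_cons hE hsimple (h k) (gk ∘ τ) hw_ind hx_cl c]
        congr 2 <;>
          rw [(τ.surjective).range_comp gk, hins]
      rw [hstep1]
      congr 1
      rw [sum_smul_ite_mul]
      -- evaluate the two inner sums by the induction hypothesis
      have hA : (∑ τ : Equiv.Perm (Fin (p+1)), ((Equiv.Perm.sign τ : ℤ) •
          flagMonomial K Mat (gk ∘ τ))) = osMonomial K Mat gk := by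
        have := ih gk hginj hg_ind ⊤
        rw [if_pos le_top] at this
        rw [← this]
        apply Finset.sum_congr rfl
        intro τ _
        rw [if_pos le_top]
      have hB : (∑ τ : Equiv.Perm (Fin (p+1)), ((Equiv.Perm.sign τ : ℤ) •
          (if ((flagTuple Mat (gk ∘ τ) 0 : α) : WithTop α) ≤ ((ak : α) : WithTop α)
            then flagMonomial K Mat (gk ∘ τ) else 0)))
          = if ((dmin (Mat.closure (Set.range gk)) (gk 0) : α) : WithTop α)
              ≤ ((ak : α) : WithTop α) then osMonomial K Mat gk else 0 :=
        ih gk hginj hg_ind (ak : WithTop α)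
      rw [hA, hB]
      set m0k : α := dmin (Mat.closure (Set.range gk)) (gk 0) with hm0kdef
      have hgkne : (Mat.closure (Set.range gk)).Nonempty :=
        ⟨gk 0, Mat.subset_closure _ (by rw [hE]; exact Set.subset_univ _) ⟨0, rfl⟩⟩
      have hm0k_mem : m0k ∈ Mat.closure (Set.range gk) := dmin_mem hgkne (gk 0)
      have hsub : Mat.closure (Set.range gk) ⊆ Mat.closure (Set.range h) :=
        Mat.closure_subset_closure (by rw [hrange_gk]; exact Set.diff_subset)
      by_cases hmem : m₀ ∈ Mat.closure (Set.range gk)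
      · -- here m0k = m₀ ≤ ak, so the bracket vanishes
        have hm0k : m0k = m₀ := dmin_eq hmem (fun b hb => dmin_le (hsub hb) (h 0)) (gk 0)
        have hle : ((m0k : α) : WithTop α) ≤ ((ak : α) : WithTop α) := by
          rw [WithTop.coe_le_coe, hm0k]
          exact dmin_le hak_mem.1 (h 0)
        rw [if_pos hle, sub_self, mul_zero, if_pos hmem]
        rw [ite_self, ite_self]
      · -- here ak = m₀ < m0k, so the bracket is the full monomial
        have hak_eq : ak = m₀ := by
          apply dmin_eq (S := Mat.closure (Set.range h) \ Mat.closure (Set.range gk))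
            (⟨hm₀mem, hmem⟩ : m₀ ∈ Mat.closure (Set.range h) \ Mat.closure (Set.range gk))
          · rintro b ⟨hb1, _⟩
            exact dmin_le hb1 (h 0)
        have hnle : ¬ ((m0k : α) : WithTop α) ≤ ((ak : α) : WithTop α) := by
          rw [WithTop.coe_le_coe, hak_eq]
          intro hcon
          have h1 : m₀ ≤ m0k := dmin_le (hsub hm0k_mem) (h 0)
          have h2 : m0k = m₀ := le_antisymm hcon h1
          exact hmem (h2 ▸ hm0k_mem)
        rw [if_neg hnle, sub_zero, if_neg hmem, hak_eq]
    -- combine over k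
    have htotal : (∑ k : Fin (p+2), ∑ τ : Equiv.Perm (Fin (p+1)),
        ((Equiv.Perm.sign (permPhi (k, τ)) : ℤ) •
          (if ((flagTuple Mat (h ∘ permPhi (k, τ)) 0 : α) : WithTop α) ≤ c then
            flagMonomial K Mat (h ∘ permPhi (k, τ)) else 0)))
        = ∑ k : Fin (p+2), ((-1 : ℤ) ^ (k : ℕ)) • (if ((m₀ : α) : WithTop α) ≤ c then
            (if m₀ ∈ Mat.closure (Set.range (h ∘ k.succAbove)) then 0
              else osE K Mat m₀ * osMonomial K Mat (h ∘ k.succAbove)) else 0) :=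
      Finset.sum_congr rfl (fun k _ => hstep k)
    rw [htotal, sum_ite_smul]
    by_cases hc : ((m₀ : α) : WithTop α) ≤ c
    · rw [if_pos hc, if_pos hc]
      have : (∑ k : Fin (p+2), ((-1 : ℤ) ^ (k : ℕ)) •
          (if m₀ ∈ Mat.closure (Set.range (h ∘ k.succAbove)) then 0
            else osE K Mat m₀ * osMonomial K Mat (h ∘ k.succAbove)))
          = ∑ k : Fin (p+2), ((-1 : ℤ) ^ (k : ℕ)) •
            (osE K Mat m₀ * osMonomial K Mat (h ∘ k.succAbove)) := by
        apply Finset.sum_congr rfl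
        intro k _
        by_cases hmem : m₀ ∈ Mat.closure (Set.range (h ∘ k.succAbove))
        · rw [if_pos hmem, osE_mul_osMonomial_of_mem_closure (K := K) Mat m₀ _ hmem
            (hinj.comp Fin.succAbove_right_injective)
            (hind.subset (Set.range_comp_subset_range _ _))]
        · rw [if_neg hmem]
      rw [this]
      exact key_sum_lemma (K := K) Mat m₀ h hinj hind hm₀mem
    · rw [if_neg hc, if_neg hc]

end PartE

/-- in the Orlik–Solomon algebra of a simple matroid on a linearly
ordered ground set, for any independent tuple `T` taken in the induced
(increasing) order,
`m(T) = ∑_{σ ∈ Σ_p} sgn(σ) · m(ℱ(σT))`. -/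
theorem osMonomial_eq_sum_flags (Mat : Matroid α) (hE : Mat.E = Set.univ)
    (hsimple : ∀ s t : α, Mat.Indep {s, t})
    (p : ℕ) (T : Fin p → α) (hmono : StrictMono T)
    (hind : Mat.Indep (Set.range T)) :
    osMonomial K Mat T =
      ∑ σ : Equiv.Perm (Fin p),
        ((Equiv.Perm.sign σ : ℤ) • flagMonomial K Mat (T ∘ σ)) := by
  cases p with
  | zero =>
    haveI : Subsingleton (Equiv.Perm (Fin 0)) := ⟨fun a b => Equiv.ext (fun x => x.elim0)⟩
    rw [Fintype.sum_subsingleton _ (1 : Equiv.Perm (Fin 0))]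
    have hcomp : T ∘ (1 : Equiv.Perm (Fin 0)) = T := by funext j; exact j.elim0
    rw [hcomp, map_one, Units.val_one, one_smul]
    have hft : flagTuple Mat T = T := by funext j; exact j.elim0
    have hrange0 : Set.range (flagTuple Mat T) = ∅ := Set.range_eq_empty _
    symm
    simp only [flagMonomial]
    rw [if_pos ⟨fun a => a.elim0, isNBC_subsingleton hE hsimple
      (hrange0 ▸ Set.subsingleton_empty)⟩, hft]
  | succ q =>
    have hinj : Function.Injective T := hmono.injective
    have hcut := cutW (K := K) Mat hE hsimple q T hinj hind ⊤
    rw [if_pos le_top] at hcut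
    rw [show (∑ σ : Equiv.Perm (Fin (q+1)),
        ((Equiv.Perm.sign σ : ℤ) • flagMonomial K Mat (T ∘ σ)))
      = ∑ σ : Equiv.Perm (Fin (q+1)), ((Equiv.Perm.sign σ : ℤ) •
          (if ((flagTuple Mat (T ∘ σ) 0 : α) : WithTop α) ≤ (⊤ : WithTop α) then
            flagMonomial K Mat (T ∘ σ) else 0)) from
      Finset.sum_congr rfl (fun σ _ => by rw [if_pos le_top]), hcut]

end
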